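/- Let β > 0, 0 ≤ α < 2√β, f(x) = βx²/2 on ℝ, and let X : ℝ → ℝ be a twice continuously differentiable solution of Ẍ(t) + αẊ(t) + βX(t) = 0. Letت t₁ < t₂ with t₂ − t₁ > 2π/√(4β − α²), and set J_α[Y] = ∫_{t₁}^{t₂} e^{αt}( (1/2)Ẏ(t)² − βY(t)²/2 ) dt. Then X is a saddle point of J_α: for every δ > 0 there exist continuously differentiable functions h₊, h₋ : [t₁,t₂] → ℝ with h₊(t₁) = h₊(t₂) = h₋(t₁) = h₋(t₂) = 0, each with C¹ norm max|h| + max|ḣ| less than δ, such that J_α[X + h₊] > J_α[X] and J_α[X + h₋] < J_α[X]. -/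

import Mathlib

open Set

/-- The action functional with constant damping `α` on `[t₁, t₂]` for the scalar quadratic
loss `f(x) = βx²/2`, evaluated on a curve `Y` with derivative `Y'`. -/
noncomputable def constDampAction1D (β α t₁ t₂ : ℝ) (Y Y' : ℝ → ℝ) : ℝ :=
  ∫ t in t₁..t₂, Real.exp (α * t) * ((1 / 2) * (Y' t) ^ 2 - β * (Y t) ^ 2 / 2)

noncomputable def pert (α t₁ ε ω : ℝ) : ℝ → ℝ :=
  fun t => ε * Real.exp (-(α / 2) * t) * Real.sin (ω * (t - t₁))

noncomputable def pert' (α t₁ ε ω : ℝ) : ℝ → ℝ :=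
  fun t => ε * Real.exp (-(α / 2) * t) *
    (ω * Real.cos (ω * (t - t₁)) - α / 2 * Real.sin (ω * (t - t₁)))

lemma pert_hasDerivAt (α t₁ ε ω t : ℝ) :
    HasDerivAt (pert α t₁ ε ω) (pert' α t₁ ε ω t) t := by
  have h1 : HasDerivAt (fun t : ℝ => ε * Real.exp (-(α / 2) * t))
      (ε * (Real.exp (-(α / 2) * t) * (-(α / 2) * 1))) t :=
    (((hasDerivAt_id t).const_mul (-(α / 2))).exp).const_mul ε
  have h2 : HasDerivAt (fun t : ℝ => Real.sin (ω * (t - t₁)))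
      (Real.cos (ω * (t - t₁)) * (ω * 1)) t :=
    (((hasDerivAt_id t).sub_const t₁).const_mul ω).sin
  have := h1.mul h2
  refine this.congr_deriv ?_
  simp [pert']
  ring

lemma pert_cont (α t₁ ε ω : ℝ) : Continuous (pert α t₁ ε ω) := by
  unfold pert; fun_prop

lemma pert_cont' (α t₁ ε ω : ℝ) : Continuous (pert' α t₁ ε ω) := by
  unfold pert'; fun_prop

lemma pert_quad_integral (β α t₁ t₂ ε ω : ℝ) (k : ℕ) (hL : t₁ < t₂)
    (hωL : ω * (t₂ - t₁) = k * Real.pi) (hω : ω ≠ 0) :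
    (∫ t in t₁..t₂, Real.exp (α * t) *
        ((1 / 2) * (pert' α t₁ ε ω t) ^ 2 - β * (pert α t₁ ε ω t) ^ 2 / 2))
      = ε ^ 2 * (t₂ - t₁) / 4 * (ω ^ 2 - β + α ^ 2 / 4) := by
  set F : ℝ → ℝ := fun t => ε ^ 2 / 2 *
    ((ω ^ 2 + α ^ 2 / 4 - β) / 2 * (t - t₁)
      + (ω ^ 2 - α ^ 2 / 4 + β) / (4 * ω) * Real.sin (2 * ω * (t - t₁))
      + α / 4 * Real.cos (2 * ω * (t - t₁))) with hF
  have hderiv : ∀ t ∈ uIcc t₁ t₂, HasDerivAt F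
      (Real.exp (α * t) *
        ((1 / 2) * (pert' α t₁ ε ω t) ^ 2 - β * (pert α t₁ ε ω t) ^ 2 / 2)) t := by
    intro t _
    have hlin : HasDerivAt (fun t : ℝ => 2 * ω * (t - t₁)) (2 * ω * 1) t :=
      ((hasDerivAt_id t).sub_const t₁).const_mul (2 * ω)
    have hD : HasDerivAt F (ε ^ 2 / 2 *
        ((ω ^ 2 + α ^ 2 / 4 - β) / 2 * 1
          + (ω ^ 2 - α ^ 2 / 4 + β) / (4 * ω) * (Real.cos (2 * ω * (t - t₁)) * (2 * ω * 1))
          + α / 4 * (-Real.sin (2 * ω * (t - t₁)) * (2 * ω * 1)))) t := by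
      have hA : HasDerivAt (fun t : ℝ => (ω ^ 2 + α ^ 2 / 4 - β) / 2 * (t - t₁))
          ((ω ^ 2 + α ^ 2 / 4 - β) / 2 * 1) t :=
        ((hasDerivAt_id t).sub_const t₁).const_mul _
      have hB : HasDerivAt (fun t : ℝ =>
          (ω ^ 2 - α ^ 2 / 4 + β) / (4 * ω) * Real.sin (2 * ω * (t - t₁)))
          ((ω ^ 2 - α ^ 2 / 4 + β) / (4 * ω) * (Real.cos (2 * ω * (t - t₁)) * (2 * ω * 1))) t :=
        hlin.sin.const_mul _
      have hC : HasDerivAt (fun t : ℝ => α / 4 * Real.cos (2 * ω * (t - t₁)))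
          (α / 4 * (-Real.sin (2 * ω * (t - t₁)) * (2 * ω * 1))) t :=
        hlin.cos.const_mul _
      exact ((hA.add hB).add hC).const_mul _
    have hBcoef : (ω ^ 2 - α ^ 2 / 4 + β) / (4 * ω) * (Real.cos (2 * ω * (t - t₁)) * (2 * ω * 1))
        = (ω ^ 2 - α ^ 2 / 4 + β) / 2 * Real.cos (2 * ω * (t - t₁)) := by
      field_simp
      ring
    rw [hBcoef] at hD
    convert hD using 1
    have e1 : Real.exp (α * t) * Real.exp (-(α / 2) * t) ^ 2 = 1 := by
      rw [sq, ← Real.exp_add, ← Real.exp_add,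
        show α * t + (-(α / 2) * t + -(α / 2) * t) = 0 from by ring, Real.exp_zero]
    have hu : 2 * ω * (t - t₁) = 2 * (ω * (t - t₁)) := by ring
    rw [hu, Real.cos_two_mul, Real.sin_two_mul]
    simp only [pert, pert']
    set s := Real.sin (ω * (t - t₁))
    set c := Real.cos (ω * (t - t₁))
    set E := Real.exp (-(α / 2) * t)
    have hsc : s ^ 2 + c ^ 2 = 1 := Real.sin_sq_add_cos_sq _
    linear_combination (ε ^ 2 * ((1 / 2) * (ω * c - α / 2 * s) ^ 2 - β * s ^ 2 / 2)) * e1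
      + (ε ^ 2 / 2 * (α ^ 2 / 4 - β)) * hsc
  have hint : IntervalIntegrable (fun t => Real.exp (α * t) *
      ((1 / 2) * (pert' α t₁ ε ω t) ^ 2 - β * (pert α t₁ ε ω t) ^ 2 / 2)) MeasureTheory.volume t₁ t₂ := by
    apply Continuous.intervalIntegrable
    have := pert_cont α t₁ ε ω
    have := pert_cont' α t₁ ε ω
    fun_prop
  rw [intervalIntegral.integral_eq_sub_of_hasDerivAt hderiv hint]
  have e2 : 2 * ω * (t₂ - t₁) = (k : ℝ) * (2 * Real.pi) := by
    rw [show 2 * ω * (t₂ - t₁) = 2 * (ω * (t₂ - t₁)) from by ring, hωL]; ring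
  have e3 : 2 * ω * (t₂ - t₁) = ((2 * k : ℕ) : ℝ) * Real.pi := by
    push_cast; rw [e2]; ring
  have hsin : Real.sin (2 * ω * (t₂ - t₁)) = 0 := by
    rw [e3, Real.sin_nat_mul_pi]
  have hcos : Real.cos (2 * ω * (t₂ - t₁)) = 1 := by
    rw [e2, Real.cos_nat_mul_two_pi]
  simp only [hF]
  rw [hsin, hcos]
  norm_num
  ring

lemma action_diff (β α t₁ t₂ : ℝ) (X X' X'' h h' : ℝ → ℝ)
    (hX : ∀ t : ℝ, HasDerivAt X (X' t) t) (hX' : ∀ t : ℝ, HasDerivAt X' (X'' t) t)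
    (hODE : ∀ t : ℝ, X'' t + α * X' t + β * X t = 0)
    (hh : ∀ t : ℝ, HasDerivAt h (h' t) t) (hh'c : Continuous h')
    (h1 : h t₁ = 0) (h2 : h t₂ = 0) :
    constDampAction1D β α t₁ t₂ (X + h) (X' + h') =
      constDampAction1D β α t₁ t₂ X X'
        + ∫ t in t₁..t₂, Real.exp (α * t) * ((1 / 2) * (h' t) ^ 2 - β * (h t) ^ 2 / 2) := by
  have cX : Continuous X := continuous_iff_continuousAt.2 fun t => (hX t).continuousAt
  have cX' : Continuous X' := continuous_iff_continuousAt.2 fun t => (hX' t).continuousAt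
  have ch : Continuous h := continuous_iff_continuousAt.2 fun t => (hh t).continuousAt
  have icross : (∫ t in t₁..t₂, Real.exp (α * t) * (X' t * h' t - β * (X t * h t))) = 0 := by
    have hd : ∀ t ∈ uIcc t₁ t₂, HasDerivAt (fun t => Real.exp (α * t) * (X' t * h t))
        (Real.exp (α * t) * (X' t * h' t - β * (X t * h t))) t := by
      intro t _
      have he : HasDerivAt (fun t : ℝ => Real.exp (α * t))
          (Real.exp (α * t) * (α * 1)) t := ((hasDerivAt_id t).const_mul α).exp
      have hm : HasDerivAt (fun t => X' t * h t) (X'' t * h t + X' t * h' t) t :=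
        (hX' t).mul (hh t)
      have := he.mul hm
      refine this.congr_deriv ?_
      have hO : X'' t = -(α * X' t) - β * X t := by linarith [hODE t]
      rw [hO]; ring
    have hi : IntervalIntegrable (fun t => Real.exp (α * t) * (X' t * h' t - β * (X t * h t)))
        MeasureTheory.volume t₁ t₂ := by
      apply Continuous.intervalIntegrable; fun_prop
    rw [intervalIntegral.integral_eq_sub_of_hasDerivAt hd hi, h1, h2]
    ring
  unfold constDampAction1D
  have key : (fun t => Real.exp (α * t) * ((1 / 2) * ((X' + h') t) ^ 2 - β * ((X + h) t) ^ 2 / 2))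
      = fun t => Real.exp (α * t) * ((1 / 2) * (X' t) ^ 2 - β * (X t) ^ 2 / 2)
        + (Real.exp (α * t) * (X' t * h' t - β * (X t * h t))
          + Real.exp (α * t) * ((1 / 2) * (h' t) ^ 2 - β * (h t) ^ 2 / 2)) := by
    funext t
    simp only [Pi.add_apply]
    ring
  rw [key]
  rw [intervalIntegral.integral_add (by apply Continuous.intervalIntegrable; fun_prop)
      (by apply Continuous.intervalIntegrable; fun_prop),
    intervalIntegral.integral_add (by apply Continuous.intervalIntegrable; fun_prop)
      (by apply Continuous.intervalIntegrable; fun_prop), icross]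
  ring

lemma pert_sup_bound (α t₁ t₂ δ ε ω : ℝ) (ht : t₁ < t₂) (hα0 : 0 ≤ α) (hω : 0 < ω)
    (hδ : 0 < δ) (hε : ε = δ / (2 * (Real.exp (-(α / 2) * t₁) * (1 + ω + α / 2)))) :
    (⨆ t ∈ Icc t₁ t₂, |pert α t₁ ε ω t|) + (⨆ t ∈ Icc t₁ t₂, |pert' α t₁ ε ω t|) < δ := by
  set M := Real.exp (-(α / 2) * t₁) with hM
  have hMpos : 0 < M := Real.exp_pos _
  have hden : 0 < 1 + ω + α / 2 := by linarith
  have hεpos : 0 < ε := by rw [hε]; positivity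
  have hexp : ∀ t ∈ Icc t₁ t₂, Real.exp (-(α / 2) * t) ≤ M := by
    intro t htm
    exact Real.exp_le_exp.2 (by nlinarith [htm.1])
  have b1 : ∀ t ∈ Icc t₁ t₂, |pert α t₁ ε ω t| ≤ ε * M := by
    intro t htm
    have : |pert α t₁ ε ω t| = ε * Real.exp (-(α / 2) * t) * |Real.sin (ω * (t - t₁))| := by
      simp only [pert, abs_mul, abs_of_pos hεpos, abs_of_pos (Real.exp_pos _)]
    rw [this]
    have hsin : |Real.sin (ω * (t - t₁))| ≤ 1 :=
      abs_le.mpr ⟨Real.neg_one_le_sin _, Real.sin_le_one _⟩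
    have hE := hexp t htm
    calc ε * Real.exp (-(α / 2) * t) * |Real.sin (ω * (t - t₁))|
        ≤ ε * Real.exp (-(α / 2) * t) * 1 :=
          mul_le_mul_of_nonneg_left hsin (by positivity)
      _ = ε * Real.exp (-(α / 2) * t) := mul_one _
      _ ≤ ε * M := mul_le_mul_of_nonneg_left hE hεpos.le
  have b2 : ∀ t ∈ Icc t₁ t₂, |pert' α t₁ ε ω t| ≤ ε * M * (ω + α / 2) := by
    intro t htm
    have habs : |ω * Real.cos (ω * (t - t₁)) - α / 2 * Real.sin (ω * (t - t₁))| ≤ ω + α / 2 := by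
      calc |ω * Real.cos (ω * (t - t₁)) - α / 2 * Real.sin (ω * (t - t₁))|
          ≤ |ω * Real.cos (ω * (t - t₁))| + |α / 2 * Real.sin (ω * (t - t₁))| := abs_sub _ _
        _ ≤ ω + α / 2 := by
            rw [abs_mul, abs_mul, abs_of_pos hω, abs_of_nonneg (by linarith : (0:ℝ) ≤ α / 2)]
            have hs : |Real.sin (ω * (t - t₁))| ≤ 1 :=
              abs_le.mpr ⟨Real.neg_one_le_sin _, Real.sin_le_one _⟩
            have hc : |Real.cos (ω * (t - t₁))| ≤ 1 :=
              abs_le.mpr ⟨Real.neg_one_le_cos _, Real.cos_le_one _⟩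
            nlinarith [abs_nonneg (Real.sin (ω * (t - t₁))), abs_nonneg (Real.cos (ω * (t - t₁)))]
    have : |pert' α t₁ ε ω t| = ε * Real.exp (-(α / 2) * t) *
        |ω * Real.cos (ω * (t - t₁)) - α / 2 * Real.sin (ω * (t - t₁))| := by
      simp only [pert', abs_mul, abs_of_pos hεpos, abs_of_pos (Real.exp_pos _)]
    rw [this]
    have hE := hexp t htm
    have hEpos := Real.exp_pos (-(α / 2) * t)
    have habsnn := abs_nonneg (ω * Real.cos (ω * (t - t₁)) - α / 2 * Real.sin (ω * (t - t₁)))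
    calc ε * Real.exp (-(α / 2) * t) * |ω * Real.cos (ω * (t - t₁)) - α / 2 * Real.sin (ω * (t - t₁))|
        ≤ ε * M * |ω * Real.cos (ω * (t - t₁)) - α / 2 * Real.sin (ω * (t - t₁))| := by
          apply mul_le_mul_of_nonneg_right _ habsnn
          exact mul_le_mul_of_nonneg_left hE hεpos.le
      _ ≤ ε * M * (ω + α / 2) :=
          mul_le_mul_of_nonneg_left habs (by positivity)
  have s1 : (⨆ t ∈ Icc t₁ t₂, |pert α t₁ ε ω t|) ≤ ε * M := by
    refine Real.iSup_le (fun t => Real.iSup_le (fun htm => b1 t htm) (by positivity)) (by positivity)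
  have s2 : (⨆ t ∈ Icc t₁ t₂, |pert' α t₁ ε ω t|) ≤ ε * M * (ω + α / 2) := by
    refine Real.iSup_le (fun t => Real.iSup_le (fun htm => b2 t htm) (by positivity)) (by positivity)
  have : ε * M + ε * M * (ω + α / 2) = δ / 2 := by
    rw [hε]
    field_simp
    ring
  linarith

/-- **Underdamped Nesterov's path is a saddle point of the action on long intervals.**
Let `β > 0`, `0 ≤ α < 2√β`, and let `X` be a twice continuously differentiable solution of
`Ẍ + αẊ + βX = 0`.  If `t₂ - t₁ > 2π/√(4β - α²)`, then arbitrarily small (in `C¹` norm)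
admissible perturbations can both increase and decrease the action `J_α`. -/
theorem underdamped_nesterov_saddle
    (β α : ℝ) (hβ : 0 < β) (hα0 : 0 ≤ α) (hα : α < 2 * Real.sqrt β)
    (X X' X'' : ℝ → ℝ)
    (hX : ∀ t : ℝ, HasDerivAt X (X' t) t)
    (hX' : ∀ t : ℝ, HasDerivAt X' (X'' t) t)
    (hX'' : Continuous X'')
    (hODE : ∀ t : ℝ, X'' t + α * X' t + β * X t = 0)
    (t₁ t₂ : ℝ) (ht : t₁ < t₂)
    (hgap : t₂ - t₁ > 2 * Real.pi / Real.sqrt (4 * β - α ^ 2)) :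
    ∀ δ > (0 : ℝ), ∃ hp hp' hm hm' : ℝ → ℝ,
      (∀ t ∈ Icc t₁ t₂, HasDerivWithinAt hp (hp' t) (Icc t₁ t₂) t) ∧
      ContinuousOn hp' (Icc t₁ t₂) ∧ hp t₁ = 0 ∧ hp t₂ = 0 ∧
      (∀ t ∈ Icc t₁ t₂, HasDerivWithinAt hm (hm' t) (Icc t₁ t₂) t) ∧
      ContinuousOn hm' (Icc t₁ t₂) ∧ hm t₁ = 0 ∧ hm t₂ = 0 ∧
      (⨆ t ∈ Icc t₁ t₂, |hp t|) + (⨆ t ∈ Icc t₁ t₂, |hp' t|) < δ ∧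
      (⨆ t ∈ Icc t₁ t₂, |hm t|) + (⨆ t ∈ Icc t₁ t₂, |hm' t|) < δ ∧
      constDampAction1D β α t₁ t₂ (X + hp) (X' + hp') > constDampAction1D β α t₁ t₂ X X' ∧
      constDampAction1D β α t₁ t₂ (X + hm) (X' + hm') < constDampAction1D β α t₁ t₂ X X' := by
  intro δ hδ
  have hL : 0 < t₂ - t₁ := sub_pos.2 ht
  have hπ := Real.pi_pos
  have hsq : Real.sqrt β ^ 2 = β := Real.sq_sqrt hβ.le
  have hα4 : α ^ 2 < 4 * β := by nlinarith [Real.sqrt_nonneg β]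
  have hs2 : 0 < β - α ^ 2 / 4 := by linarith
  set s := Real.sqrt (β - α ^ 2 / 4) with hsdef
  have hs : 0 < s := Real.sqrt_pos.2 hs2
  have hss : s ^ 2 = β - α ^ 2 / 4 := Real.sq_sqrt hs2.le
  -- rewrite the gap
  have hsqrt4 : Real.sqrt (4 * β - α ^ 2) = 2 * s := by
    rw [show 4 * β - α ^ 2 = 2 ^ 2 * (β - α ^ 2 / 4) from by ring,
      Real.sqrt_mul (by positivity), Real.sqrt_sq (by norm_num : (0:ℝ) ≤ 2)]
  have hgap' : Real.pi / s < t₂ - t₁ := by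
    have : 2 * Real.pi / Real.sqrt (4 * β - α ^ 2) = Real.pi / s := by
      rw [hsqrt4]
      field_simp
    linarith [this ▸ hgap]
  -- minus frequency
  set ωm := Real.pi / (t₂ - t₁) with hωmdef
  have hωm : 0 < ωm := by positivity
  have hωmlt : ωm < s := by
    rw [hωmdef, div_lt_iff₀ hL]
    have := (div_lt_iff₀ hs).1 hgap'
    nlinarith
  have hωmsq : ωm ^ 2 < β - α ^ 2 / 4 := by nlinarith
  have hωmL : ωm * (t₂ - t₁) = ((1 : ℕ) : ℝ) * Real.pi := by
    rw [hωmdef]; field_simp; norm_num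
  -- plus frequency
  obtain ⟨k, hk⟩ := exists_nat_gt (s * (t₂ - t₁) / Real.pi)
  set ωp := (k : ℝ) * Real.pi / (t₂ - t₁) with hωpdef
  have hkgt : s * (t₂ - t₁) < k * Real.pi := (div_lt_iff₀ hπ).1 hk
  have hωpgt : s < ωp := by
    rw [hωpdef, lt_div_iff₀ hL]
    nlinarith
  have hωp : 0 < ωp := lt_trans hs hωpgt
  have hωpsq : β - α ^ 2 / 4 < ωp ^ 2 := by nlinarith
  have hωpL : ωp * (t₂ - t₁) = (k : ℝ) * Real.pi := by
    rw [hωpdef]; field_simp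
  -- epsilons
  set εp := δ / (2 * (Real.exp (-(α / 2) * t₁) * (1 + ωp + α / 2))) with hεpdef
  set εm := δ / (2 * (Real.exp (-(α / 2) * t₁) * (1 + ωm + α / 2))) with hεmdef
  have hεp : 0 < εp := by rw [hεpdef]; positivity
  have hεm : 0 < εm := by rw [hεmdef]; positivity
  refine ⟨pert α t₁ εp ωp, pert' α t₁ εp ωp, pert α t₁ εm ωm, pert' α t₁ εm ωm,
    fun t _ => (pert_hasDerivAt α t₁ εp ωp t).hasDerivWithinAt,
    (pert_cont' α t₁ εp ωp).continuousOn, ?_, ?_,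
    fun t _ => (pert_hasDerivAt α t₁ εm ωm t).hasDerivWithinAt,
    (pert_cont' α t₁ εm ωm).continuousOn, ?_, ?_,
    pert_sup_bound α t₁ t₂ δ εp ωp ht hα0 hωp hδ hεpdef,
    pert_sup_bound α t₁ t₂ δ εm ωm ht hα0 hωm hδ hεmdef, ?_, ?_⟩
  · simp [pert]
  · have : Real.sin (ωp * (t₂ - t₁)) = 0 := by rw [hωpL, Real.sin_nat_mul_pi]
    simp [pert, this]
  · simp [pert]
  · have : Real.sin (ωm * (t₂ - t₁)) = 0 := by rw [hωmL, Real.sin_nat_mul_pi]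
    simp [pert, this]
  · -- plus: action increases
    have h1 : pert α t₁ εp ωp t₁ = 0 := by simp [pert]
    have h2 : pert α t₁ εp ωp t₂ = 0 := by
      have : Real.sin (ωp * (t₂ - t₁)) = 0 := by rw [hωpL, Real.sin_nat_mul_pi]
      simp [pert, this]
    rw [action_diff β α t₁ t₂ X X' X'' _ _ hX hX' hODE (pert_hasDerivAt α t₁ εp ωp)
      (pert_cont' α t₁ εp ωp) h1 h2,
      pert_quad_integral β α t₁ t₂ εp ωp k ht hωpL hωp.ne']
    have : 0 < εp ^ 2 * (t₂ - t₁) / 4 * (ωp ^ 2 - β + α ^ 2 / 4) := by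
      apply mul_pos (by positivity)
      linarith
    linarith
  · -- minus: action decreases
    have h1 : pert α t₁ εm ωm t₁ = 0 := by simp [pert]
    have h2 : pert α t₁ εm ωm t₂ = 0 := by
      have : Real.sin (ωm * (t₂ - t₁)) = 0 := by rw [hωmL, Real.sin_nat_mul_pi]
      simp [pert, this]
    rw [action_diff β α t₁ t₂ X X' X'' _ _ hX hX' hODE (pert_hasDerivAt α t₁ εm ωm)
      (pert_cont' α t₁ εm ωm) h1 h2,
      pert_quad_integral β α t₁ t₂ εm ωm 1 ht hωmL hωm.ne']
    have : εm ^ 2 * (t₂ - t₁) / 4 * (ωm ^ 2 - β + α ^ 2 / 4) < 0 := by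
      apply mul_neg_of_pos_of_neg (by positivity)
      linarith
    linarith
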